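/- If x ∼ y (x and y related by a finite composition of d-block-switch transformations), then x_{1:d} = y_{1:d} and the multisets of (d+1)-length contiguous windows of x and y coincide: {x_{i:(i+d)} : 1 ≤ i ≤ M-d} = {y_{i:(i+d)} : 1 ≤ i ≤ M-d} as multisets. -/

import Mathlib

open scoped Classical

variable {Y : Type*}

/-- The contiguous slice of a list: positions `a, a+1, …, b-1` (0-indexed, half-open). -/
def seg (y : List Y) (a b : ℕ) : List Y := (y.drop a).take (b - a)

/-- The `d`-block-switch transformation `T_b^{(d)}` for `b = (i,j,k,l)` (0-indexed, half-open
blocks `[i,j)` and `[k,l)`): if the two blocks agree on their first `d` and last `d` symbols,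
they are interchanged; otherwise the sequence is left unchanged. -/
noncomputable def blockSwitch (d i j k l : ℕ) (y : List Y) : List Y :=
  if seg y i (i + d) = seg y k (k + d) ∧ seg y (j - d) j = seg y (l - d) l then
    y.take i ++ seg y k l ++ seg y j k ++ seg y i j ++ y.drop l
  else y

/-- Validity of `b = (i,j,k,l)` for a `d`-block-switch on sequences of length `M`:
the blocks `[i,j)` and `[k,l)` are disjoint, contained in `[0,M)`, each of length ≥ d+1. -/
def ValidIdx (d M i j k l : ℕ) : Prop :=
  i + d + 1 ≤ j ∧ j ≤ k ∧ k + d + 1 ≤ l ∧ l ≤ M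

/-- The multiset of all `(d+1)`-length contiguous windows of a list. -/
def windows (d : ℕ) (y : List Y) : Multiset (List Y) :=
  ↑((List.range (y.length - d)).map fun i => seg y i (i + d + 1))

/-- x ∼ y iff y is obtained from x by a finite composition of d-block-switch
transformations (with valid indices for sequences of length M). -/
def bsRel (d M : ℕ) (x y : List Y) : Prop :=
  ∃ ts : List (ℕ × ℕ × ℕ × ℕ),
    (∀ t ∈ ts, ValidIdx d M t.1 t.2.1 t.2.2.1 t.2.2.2) ∧
    y = ts.foldr (fun t z => blockSwitch d t.1 t.2.1 t.2.2.1 t.2.2.2 z) x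

lemma windows_split {d : ℕ} (n : ℕ) (s : List Y) (h : n + d ≤ s.length) :
    windows d s = windows d (s.take (n + d)) + windows d (s.drop n) := by
  unfold windows
  have h2 : (s.take (n + d)).length - d = n := by simp; omega
  have h3 : (s.drop n).length - d = s.length - n - d := by simp
  have e1 : (List.range n).map (fun i => seg (s.take (n + d)) i (i + d + 1)) =
      (List.range n).map (fun i => seg s i (i + d + 1)) := by
    refine List.map_congr_left (fun i hi => ?_)
    rw [List.mem_range] at hi
    simp only [seg, List.drop_take, List.take_take]
    congr 1
    omega
  have e2 : (List.range (s.length - n - d)).map (fun i => seg (s.drop n) i (i + d + 1)) =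
      (List.range (s.length - n - d)).map ((fun i => seg s i (i + d + 1)) ∘ (fun i => n + i)) := by
    refine List.map_congr_left (fun i hi => ?_)
    simp only [Function.comp_apply, seg, List.drop_drop]
    congr 1
    omega
  rw [h2, h3, e1, e2, ← List.map_map (g := fun i => seg s i (i + d + 1)) (f := fun i => n + i),
    show s.length - d = n + (s.length - n - d) by omega, List.range_add, List.map_append]
  rfl

lemma windows_five {d : ℕ} (A P C Q E : List Y) (hP : d ≤ P.length) (hQ : d ≤ Q.length) :
    windows d (A ++ P ++ C ++ Q ++ E) =
      windows d (A ++ P.take d) + (windows d P +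
      (windows d (P.drop (P.length - d) ++ (C ++ Q.take d)) + (windows d Q +
      windows d (Q.drop (Q.length - d) ++ E)))) := by
  have hs : A ++ P ++ C ++ Q ++ E = A ++ (P ++ (C ++ (Q ++ E))) := by
    simp [List.append_assoc]
  have hlen : (P.drop (P.length - d)).length = d := by simp; omega
  have e1take : (A ++ (P ++ (C ++ (Q ++ E)))).take (A.length + d) = A ++ P.take d := by
    rw [List.take_length_add_append, List.take_append_of_le_length hP]
  have e1drop : (A ++ (P ++ (C ++ (Q ++ E)))).drop A.length = P ++ (C ++ (Q ++ E)) :=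
    List.drop_left
  have e2take : (P ++ (C ++ (Q ++ E))).take (P.length - d + d) = P := by
    rw [show P.length - d + d = P.length by omega, List.take_left]
  have e2drop : (P ++ (C ++ (Q ++ E))).drop (P.length - d) =
      P.drop (P.length - d) ++ (C ++ (Q ++ E)) :=
    List.drop_append_of_le_length (by omega)
  have e3take : (P.drop (P.length - d) ++ (C ++ (Q ++ E))).take (d + C.length + d) =
      P.drop (P.length - d) ++ (C ++ Q.take d) := by
    rw [show d + C.length + d = (P.drop (P.length - d)).length + (C.length + d) by omega,
      List.take_length_add_append, List.take_length_add_append, List.take_append_of_le_length hQ]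
  have e3drop : (P.drop (P.length - d) ++ (C ++ (Q ++ E))).drop (d + C.length) = Q ++ E := by
    rw [show d + C.length = (P.drop (P.length - d)).length + C.length by omega,
      List.drop_length_add_append, List.drop_left]
  have e4take : (Q ++ E).take (Q.length - d + d) = Q := by
    rw [show Q.length - d + d = Q.length by omega, List.take_left]
  have e4drop : (Q ++ E).drop (Q.length - d) = Q.drop (Q.length - d) ++ E :=
    List.drop_append_of_le_length (by omega)
  rw [hs, windows_split A.length (A ++ (P ++ (C ++ (Q ++ E)))) (by simp; omega), e1take, e1drop,
    windows_split (P.length - d) (P ++ (C ++ (Q ++ E))) (by simp; omega), e2take, e2drop,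
    windows_split (d + C.length) (P.drop (P.length - d) ++ (C ++ (Q ++ E)))
      (by simp; omega), e3take, e3drop,
    windows_split (Q.length - d) (Q ++ E) (by simp; omega), e4take, e4drop]

lemma windows_swap {d : ℕ} (A B C D E : List Y) (hB : d ≤ B.length) (hD : d ≤ D.length)
    (h1 : B.take d = D.take d) (h2 : B.drop (B.length - d) = D.drop (D.length - d)) :
    windows d (A ++ B ++ C ++ D ++ E) = windows d (A ++ D ++ C ++ B ++ E) := by
  rw [windows_five A B C D E hB hD, windows_five A D C B E hD hB, h1, h2]
  ac_rfl

lemma seg_length (y : List Y) (a b : ℕ) (hb : b ≤ y.length) (hab : a ≤ b) :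
    (seg y a b).length = b - a := by
  simp [seg]; omega

lemma decomp (y : List Y) (i j k l : ℕ) (hij : i ≤ j) (hjk : j ≤ k) (hkl : k ≤ l) :
    y = y.take i ++ seg y i j ++ seg y j k ++ seg y k l ++ y.drop l := by
  have step : ∀ a b : ℕ, a ≤ b → y.drop a = seg y a b ++ y.drop b := by
    intro a b hab
    conv_lhs => rw [← List.take_append_drop (b - a) (y.drop a)]
    rw [List.drop_drop, seg]
    congr 2
    omega
  calc y = y.take i ++ y.drop i := (List.take_append_drop i y).symm
    _ = y.take i ++ (seg y i j ++ y.drop j) := by rw [← step i j hij]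
    _ = y.take i ++ (seg y i j ++ (seg y j k ++ y.drop k)) := by rw [← step j k hjk]
    _ = y.take i ++ (seg y i j ++ (seg y j k ++ (seg y k l ++ y.drop l))) := by
        rw [← step k l hkl]
    _ = _ := by simp [List.append_assoc]

lemma take_pre {d : ℕ} (u v v' w w' : List Y) (hv : d ≤ v.length) (hv' : d ≤ v'.length)
    (h : v.take d = v'.take d) :
    (u ++ (v ++ w)).take d = (u ++ (v' ++ w')).take d := by
  rw [List.take_append,
    List.take_append_of_le_length (le_trans (Nat.sub_le d _) hv)]
  conv_rhs => rw [List.take_append,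
    List.take_append_of_le_length (le_trans (Nat.sub_le d _) hv')]
  congr 1
  calc v.take (d - u.length) = (v.take d).take (d - u.length) := by
        rw [List.take_take, Nat.min_eq_left (Nat.sub_le _ _)]
    _ = (v'.take d).take (d - u.length) := by rw [h]
    _ = v'.take (d - u.length) := by rw [List.take_take, Nat.min_eq_left (Nat.sub_le _ _)]

lemma blockSwitch_spec {d M i j k l : ℕ} (h : ValidIdx d M i j k l) (y : List Y)
    (hy : y.length = M) :
    (blockSwitch d i j k l y).length = M ∧ y.take d = (blockSwitch d i j k l y).take d ∧
      windows d y = windows d (blockSwitch d i j k l y) := by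
  obtain ⟨h1, h2, h3, h4⟩ := h
  unfold blockSwitch
  split_ifs with hc
  · obtain ⟨hcb, hce⟩ := hc
    have hyd := decomp y i j k l (by omega) (by omega) (by omega)
    have hBl : (seg y i j).length = j - i := seg_length y i j (by omega) (by omega)
    have hDl : (seg y k l).length = l - k := seg_length y k l (by omega) (by omega)
    have hCl : (seg y j k).length = k - j := seg_length y j k (by omega) (by omega)
    have hBtake : (seg y i j).take d = seg y i (i + d) := by
      simp only [seg, List.take_take]
      congr 1
      omega
    have hDtake : (seg y k l).take d = seg y k (k + d) := by
      simp only [seg, List.take_take]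
      congr 1
      omega
    have hBdrop : (seg y i j).drop ((seg y i j).length - d) = seg y (j - d) j := by
      rw [hBl]
      simp only [seg, List.drop_take, List.drop_drop]
      rw [show i + (j - i - d) = j - d by omega, show j - i - (j - i - d) = j - (j - d) by omega]
    have hDdrop : (seg y k l).drop ((seg y k l).length - d) = seg y (l - d) l := by
      rw [hDl]
      simp only [seg, List.drop_take, List.drop_drop]
      rw [show k + (l - k - d) = l - d by omega, show l - k - (l - k - d) = l - (l - d) by omega]
    have hBD : (seg y i j).take d = (seg y k l).take d := by rw [hBtake, hDtake, hcb]
    have hBD2 : (seg y i j).drop ((seg y i j).length - d)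
        = (seg y k l).drop ((seg y k l).length - d) := by rw [hBdrop, hDdrop, hce]
    refine ⟨?_, ?_, ?_⟩
    · have := congrArg List.length hyd
      simp only [List.length_append] at this ⊢
      omega
    · conv_lhs => rw [hyd]
      have hassoc : ∀ u v w z t : List Y,
          u ++ v ++ w ++ z ++ t = u ++ (v ++ (w ++ (z ++ t))) := by
        intros; simp [List.append_assoc]
      rw [hassoc, hassoc]
      exact take_pre _ _ _ _ _ (by omega) (by omega) hBD
    · conv_lhs => rw [hyd]
      exact windows_swap _ _ _ _ _ (by omega) (by omega) hBD hBD2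
  · exact ⟨hy, rfl, rfl⟩

lemma foldr_spec {d M : ℕ} (x : List Y) (hx : x.length = M) :
    ∀ ts : List (ℕ × ℕ × ℕ × ℕ), (∀ t ∈ ts, ValidIdx d M t.1 t.2.1 t.2.2.1 t.2.2.2) →
      (ts.foldr (fun t z => blockSwitch d t.1 t.2.1 t.2.2.1 t.2.2.2 z) x).length = M ∧
      x.take d = (ts.foldr (fun t z => blockSwitch d t.1 t.2.1 t.2.2.1 t.2.2.2 z) x).take d ∧
      windows d x = windows d (ts.foldr (fun t z => blockSwitch d t.1 t.2.1 t.2.2.1 t.2.2.2 z) x) := by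
  intro ts
  induction ts with
  | nil => exact fun _ => ⟨hx, rfl, rfl⟩
  | cons t ts ih =>
    intro h
    obtain ⟨hl, ht, hw⟩ := ih (fun t' ht' => h t' (List.mem_cons_of_mem _ ht'))
    obtain ⟨hl', ht', hw'⟩ := blockSwitch_spec (h t List.mem_cons_self) _ hl
    exact ⟨hl', ht.trans ht', hw.trans hw'⟩

/-- If x ∼ y then x and y share the same initial d symbols and the same multiset of
(d+1)-length contiguous windows. -/
theorem bsRel_preserves_prefix_and_windows {d M : ℕ} (hM : d + 1 ≤ M)
    (x y : List Y) (hx : x.length = M) (hy : y.length = M) (hxy : bsRel d M x y) :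
    x.take d = y.take d ∧ windows d x = windows d y := by
  obtain ⟨ts, hval, hfold⟩ := hxy
  subst hfold
  obtain ⟨_, ht, hw⟩ := foldr_spec x hx ts hval
  exact ⟨ht, hw⟩
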